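/- Let A ⊂ B(X) be a strongly closed unital subalgebra with complemented invariant subspace lattice. If A is reflexive (i.e., algLat A = A), then A equals its bicommutant: A'' = A. -/

import Mathlib

open Filter Topology

/-- A strongly closed unital subalgebra of `B(X)` with complemented invariant
subspace lattice which is reflexive (`algLat A ⊆ A`) equals its bicommutant: `A'' = A`. -/
theorem stmt5 {X : Type*} [NormedAddCommGroup X] [NormedSpace ℂ X] [CompleteSpace X]
    (A : Subalgebra ℂ (X →L[ℂ] X))
    (hA : IsClosed ((fun a : X →L[ℂ] X => (a : X → X)) '' (A : Set (X →L[ℂ] X))))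
    (hCISL : ∀ K : Submodule ℂ X, IsClosed (K : Set X) → (∀ a ∈ A, ∀ x ∈ K, a x ∈ K) →
      ∃ Kc : Submodule ℂ X, IsClosed (Kc : Set X) ∧ (∀ a ∈ A, ∀ x ∈ Kc, a x ∈ Kc) ∧
        IsCompl K Kc)
    (hrefl : ∀ b : X →L[ℂ] X,
      (∀ K : Submodule ℂ X, IsClosed (K : Set X) → (∀ a ∈ A, ∀ x ∈ K, a x ∈ K) →
        ∀ x ∈ K, b x ∈ K) → b ∈ A) :
    Set.centralizer (Set.centralizer (A : Set (X →L[ℂ] X))) = (A : Set (X →L[ℂ] X)) := by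
  apply Set.Subset.antisymm _ Set.subset_centralizer_centralizer
  intro b hb
  apply hrefl
  intro K hKcl hKinv x hx
  obtain ⟨Kc, hKccl, hKcinv, hcompl⟩ := hCISL K hKcl hKinv
  -- continuous projection onto K along Kc
  set P : X →L[ℂ] X :=
    K.subtypeL.comp (K.linearProjOfClosedCompl Kc hcompl hKcl hKccl) with hP
  have hPapply : ∀ y : X, P y = (K.projectionOnto Kc hcompl y : X) := by
    intro y
    rfl
  -- P commutes with every element of A
  have hPcent : P ∈ Set.centralizer (A : Set (X →L[ℂ] X)) := by
    intro a ha
    ext y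
    obtain ⟨k, c, rfl, -⟩ := Submodule.existsUnique_add_of_isCompl hcompl y
    have hak : (a : X →L[ℂ] X) (k : X) ∈ K := hKinv a ha _ k.2
    have hac : (a : X →L[ℂ] X) (c : X) ∈ Kc := hKcinv a ha _ c.2
    have h1 : P ((k : X) + (c : X)) = (k : X) := by
      rw [hPapply]
      rw [map_add, Submodule.linearProjOfIsCompl_apply_left,
        Submodule.linearProjOfIsCompl_apply_right]
      simp
    have h2 : P (a ((k : X) + (c : X))) = a (k : X) := by
      rw [map_add a, hPapply, map_add, Submodule.linearProjOfIsCompl_apply_left hcompl ⟨_, hak⟩,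
        Submodule.linearProjOfIsCompl_apply_right hcompl ⟨_, hac⟩]
      simp
    simp only [ContinuousLinearMap.mul_apply]
    rw [h1, h2]
  -- b commutes with P, hence preserves K = range of P
  have hcomm := hb P hPcent
  have hPx : P x = x := by
    rw [hPapply, Submodule.linearProjOfIsCompl_apply_left hcompl ⟨x, hx⟩]
  have : b x = P (b x) := by
    calc b x = b (P x) := by rw [hPx]
      _ = (b * P) x := rfl
      _ = (P * b) x := by rw [hcomm]
      _ = P (b x) := rfl
  rw [this, hPapply]
  exact Submodule.coe_mem _
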